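/- Let X be a random vector in ℝ^{d+1} with E‖X‖₂³ < ∞, let f ∈ C²(ℝ) with bounded second derivative, let μ̄ = E X, and for λ ≥ 0 define L_λ(γ) = E f(γ^⊤X) + (λ/2)(γ^⊤μ̄)². Suppose there are nonnegative numbers a, b, c such that x f′(x) ≥ −b for all x ∈ ℝ and f′(x)·sgn(x) ≥ c for all |x| ≥ a. Then for every γ ≠ 0, ‖∇L_λ(γ)‖₂ ≥ c·inf_{‖u‖₂=1}E|u^⊤X| − (ac + b)/‖γ‖₂. -/

import Mathlib

open MeasureTheory
open scoped RealInnerProductSpace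

/-- `ℝ^m` with the Euclidean norm. -/
abbrev Vec (m : ℕ) := EuclideanSpace ℝ (Fin m)

/-- The loss `L_λ(γ) = E f(γ⊤X) + (λ/2)(γ⊤μ̄)²`, where `μ̄ = E X`. -/
noncomputable def genLoss {m : ℕ} {Ω : Type*} [MeasurableSpace Ω] (P : Measure Ω)
    (X : Ω → Vec m) (f : ℝ → ℝ) (lam : ℝ) (γ : Vec m) : ℝ :=
  (∫ ω, f ⟪γ, X ω⟫ ∂P) + lam / 2 * ⟪γ, ∫ ω, X ω ∂P⟫ ^ 2

section Aux

lemma aux_sign_mul_abs (x : ℝ) (hx : x ≠ 0) : Real.sign x * |x| = x := by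
  rcases lt_trichotomy x 0 with h | h | h
  · rw [Real.sign_of_neg h, abs_of_neg h]; ring
  · exact absurd h hx
  · rw [Real.sign_of_pos h, abs_of_pos h]; ring

lemma aux_key_ineq (f : ℝ → ℝ) (a b c : ℝ) (ha : 0 ≤ a) (hb : 0 ≤ b) (hc : 0 ≤ c)
    (hlow : ∀ x : ℝ, -b ≤ x * deriv f x)
    (hfar : ∀ x : ℝ, a ≤ |x| → c ≤ deriv f x * Real.sign x) :
    ∀ x, c * |x| - (a * c + b) ≤ x * deriv f x := by
  intro x
  by_cases h : |x| ≤ a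
  · have h1 := hlow x
    have h2 : c * |x| ≤ c * a := mul_le_mul_of_nonneg_left h hc
    linarith
  · push_neg at h
    have hx0 : x ≠ 0 := by
      intro h0; rw [h0, abs_zero] at h; linarith
    have h1 := hfar x h.le
    have h2 : |x| * c ≤ |x| * (deriv f x * Real.sign x) :=
      mul_le_mul_of_nonneg_left h1 (abs_nonneg x)
    have h3 : Real.sign x * |x| = x := aux_sign_mul_abs x hx0
    have h4 : x * deriv f x = |x| * (deriv f x * Real.sign x) := by
      linear_combination (-(deriv f x)) * h3
    nlinarith [abs_nonneg x]

lemma aux_deriv_bound (f : ℝ → ℝ) (hf : ContDiff ℝ 2 f) (F₂ : ℝ)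
    (h : ∀ x, |deriv (deriv f) x| ≤ F₂) :
    ∀ x, |deriv f x| ≤ |deriv f 0| + F₂ * |x| := by
  have h2 : ContDiff ℝ 1 (deriv f) := by
    rw [(by norm_num : (2 : WithTop ℕ∞) = 1 + 1), contDiff_succ_iff_deriv] at hf
    exact hf.2.2
  have hd : Differentiable ℝ (deriv f) := h2.differentiable one_ne_zero
  have hF₂ : 0 ≤ F₂ := (abs_nonneg _).trans (h 0)
  have hlip : LipschitzWith F₂.toNNReal (deriv f) := by
    apply lipschitzWith_of_nnnorm_deriv_le hd
    intro x
    rw [← NNReal.coe_le_coe]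
    simpa [Real.coe_toNNReal _ hF₂] using h x
  intro x
  have h5 := hlip.dist_le_mul x 0
  rw [Real.dist_eq, Real.dist_eq, sub_zero, Real.coe_toNNReal _ hF₂] at h5
  calc |deriv f x| = |deriv f 0 + (deriv f x - deriv f 0)| := by ring_nf
    _ ≤ |deriv f 0| + |deriv f x - deriv f 0| := abs_add_le _ _
    _ ≤ |deriv f 0| + F₂ * |x| := by linarith

lemma aux_f_bound (f : ℝ → ℝ) (hf : Differentiable ℝ f) (K F₂ : ℝ)
    (hd : ∀ x, |deriv f x| ≤ K + F₂ * |x|) (hF₂ : 0 ≤ F₂) :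
    ∀ t, |f t| ≤ |f 0| + K * |t| + F₂ * |t| ^ 2 := by
  intro t
  have h0 : (0:ℝ) ∈ Set.Icc (-|t|) |t| := by simp [abs_nonneg t, neg_nonpos]
  have ht : t ∈ Set.Icc (-|t|) |t| := ⟨neg_abs_le t, le_abs_self t⟩
  have h4 : ‖f t - f 0‖ ≤ (K + F₂ * |t|) * ‖t - 0‖ :=
    Convex.norm_image_sub_le_of_norm_deriv_le (fun y _ => hf.differentiableAt)
      (fun y hy => by
        have hyt : |y| ≤ |t| := abs_le.mpr ⟨hy.1, hy.2⟩
        calc ‖deriv f y‖ = |deriv f y| := rfl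
          _ ≤ K + F₂ * |y| := hd y
          _ ≤ K + F₂ * |t| := by nlinarith)
      (convex_Icc _ _) h0 ht
  rw [sub_zero] at h4
  have h5 : |f t - f 0| ≤ (K + F₂ * |t|) * |t| := h4
  have h6 := abs_add_le (f 0) (f t - f 0)
  simp only [add_sub_cancel] at h6
  nlinarith [abs_nonneg t]

lemma aux_hasFDerivAt_inner_right {E : Type*} [NormedAddCommGroup E] [InnerProductSpace ℝ E]
    (w x : E) : HasFDerivAt (fun v => ⟪v, w⟫) (innerSL ℝ w) x := by
  have h := (innerSL ℝ w).hasFDerivAt (x := x)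
  apply h.congr_of_eventuallyEq
  filter_upwards with v
  exact (real_inner_comm v w).symm

lemma aux_norm_smul_innerSL {E : Type*} [NormedAddCommGroup E] [InnerProductSpace ℝ E]
    (c : ℝ) (x : E) : ‖c • innerSL ℝ x‖ = |c| * ‖x‖ := by
  have h : c • innerSL ℝ x = innerSL ℝ (c • x) := by
    ext v
    simp [inner_smul_left]
  rw [h, innerSL_apply_norm, norm_smul, Real.norm_eq_abs]

end Aux

set_option maxHeartbeats 1000000 in
set_option synthInstance.maxHeartbeats 400000 in
/-- if moreover `x f'(x) ≥ −b` for all `x` and `f'(x)·sgn(x) ≥ c` for `|x| ≥ a`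
(`a, b, c ≥ 0`), then for every `γ ≠ 0`,
`‖∇L_λ(γ)‖₂ ≥ c·inf_u E|u⊤X| − (ac + b)/‖γ‖₂`. -/
theorem loss_gradient_lower_bound
    {d : ℕ} {Ω : Type*} [MeasurableSpace Ω] (P : Measure Ω) [IsProbabilityMeasure P]
    (X : Ω → Vec (d + 1)) (f : ℝ → ℝ) (lam a b c : ℝ)
    (hX : Measurable X) (hX3 : Integrable (fun ω => ‖X ω‖ ^ 3) P)
    (hlam : 0 ≤ lam)
    (hf : ContDiff ℝ 2 f) (hf2 : ∃ F₂ : ℝ, ∀ x, |deriv (deriv f) x| ≤ F₂)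
    (ha : 0 ≤ a) (hb : 0 ≤ b) (hc : 0 ≤ c)
    (hlow : ∀ x : ℝ, -b ≤ x * deriv f x)
    (hfar : ∀ x : ℝ, a ≤ |x| → c ≤ deriv f x * Real.sign x) :
    ∀ γ : Vec (d + 1), γ ≠ 0 →
      c * (⨅ u : Metric.sphere (0 : Vec (d + 1)) 1, ∫ ω, |⟪(u : Vec (d + 1)), X ω⟫| ∂P)
          - (a * c + b) / ‖γ‖
        ≤ ‖gradient (genLoss P X f lam) γ‖ := by
  obtain ⟨F₂, hF₂b⟩ := hf2
  set K := |deriv f 0| with hK_def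
  have hK : 0 ≤ K := abs_nonneg _
  have hF₂ : 0 ≤ F₂ := (abs_nonneg _).trans (hF₂b 0)
  have hf1 : Differentiable ℝ f := hf.differentiable (by norm_num)
  have hcontd : Continuous (deriv f) := by
    have h2 : ContDiff ℝ 1 (deriv f) := by
      rw [(by norm_num : (2 : WithTop ℕ∞) = 1 + 1), contDiff_succ_iff_deriv] at hf
      exact hf.2.2
    exact h2.continuous
  have hd' : ∀ x, |deriv f x| ≤ K + F₂ * |x| := aux_deriv_bound f hf F₂ hF₂b
  have hfb : ∀ t, |f t| ≤ |f 0| + K * |t| + F₂ * |t| ^ 2 := aux_f_bound f hf1 K F₂ hd' hF₂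
  have hXm : AEStronglyMeasurable X P := hX.aestronglyMeasurable
  -- integrability of powers of the norm
  have hn1 : Integrable (fun ω => ‖X ω‖) P := by
    apply Integrable.mono' ((integrable_const (1:ℝ)).add hX3) hX.norm.aestronglyMeasurable
    filter_upwards with ω
    have ht : (0:ℝ) ≤ ‖X ω‖ := norm_nonneg _
    simp only [Pi.add_apply]
    rw [Real.norm_eq_abs, abs_of_nonneg ht]
    nlinarith [mul_nonneg ht (sq_nonneg (‖X ω‖ - 1)), sq_nonneg (2 * ‖X ω‖ - 1)]
  have hn2 : Integrable (fun ω => ‖X ω‖ ^ 2) P := by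
    apply Integrable.mono' ((integrable_const (1:ℝ)).add hX3)
      ((hX.norm.pow_const 2).aestronglyMeasurable)
    filter_upwards with ω
    have ht : (0:ℝ) ≤ ‖X ω‖ := norm_nonneg _
    simp only [Pi.add_apply]
    rw [Real.norm_eq_abs, abs_of_nonneg (by positivity)]
    nlinarith [mul_nonneg ht (sq_nonneg (‖X ω‖ - 1)), sq_nonneg (2 * ‖X ω‖ - 1)]
  intro γ hγ
  have hγn : 0 < ‖γ‖ := norm_pos_iff.mpr hγ
  set μ : Vec (d + 1) := ∫ ω, X ω ∂P with hμ_def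
  set T : Ω → ℝ := fun ω => ⟪γ, X ω⟫ with hT_def
  have hT_m : Measurable T := measurable_const.inner hX
  have hT_bound : ∀ ω, |T ω| ≤ ‖γ‖ * ‖X ω‖ := fun ω => abs_real_inner_le_norm γ (X ω)
  -- the integrand of the derivative
  set φ : Ω → (Vec (d + 1)) →L[ℝ] ℝ := fun ω => deriv f (T ω) • innerSL ℝ (X ω) with hφ_def
  set g : Ω → Vec (d + 1) := fun ω => deriv f (T ω) • X ω with hg_def
  set bound : Ω → ℝ := fun ω => (K + F₂ * ((‖γ‖ + 1) * ‖X ω‖)) * ‖X ω‖ with hbound_def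
  have hbound_int : Integrable bound P := by
    have : bound = fun ω => K * ‖X ω‖ + (F₂ * (‖γ‖ + 1)) * ‖X ω‖ ^ 2 := by
      funext ω; simp only [hbound_def]; ring
    rw [this]
    exact (hn1.const_mul K).add (hn2.const_mul _)
  have hφ_norm : ∀ ω, ‖φ ω‖ ≤ bound ω := by
    intro ω
    have h1 : ‖φ ω‖ = |deriv f (T ω)| * ‖X ω‖ := by
      simp only [hφ_def]
      exact aux_norm_smul_innerSL _ _
    rw [h1, hbound_def]
    have h2 : |deriv f (T ω)| ≤ K + F₂ * ((‖γ‖ + 1) * ‖X ω‖) := by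
      refine (hd' (T ω)).trans ?_
      have := hT_bound ω
      nlinarith [norm_nonneg (X ω), norm_nonneg γ]
    exact mul_le_mul_of_nonneg_right h2 (norm_nonneg _)
  have hφ_meas : AEStronglyMeasurable φ P := by
    refine AEStronglyMeasurable.smul (f := fun ω => deriv f (T ω)) (g := fun ω => innerSL ℝ (X ω)) ?_ ?_
    · exact (hcontd.measurable.comp (measurable_const.inner hX)).aestronglyMeasurable
    · exact (innerSL ℝ).continuous.comp_aestronglyMeasurable hXm
  have hφ_int : Integrable φ P :=
    Integrable.mono' hbound_int hφ_meas (Filter.Eventually.of_forall hφ_norm)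
  have hg_int : Integrable g P := by
    apply Integrable.mono' hbound_int
    · exact ((hcontd.measurable.comp (measurable_const.inner hX)).aestronglyMeasurable).smul hXm
    · filter_upwards with ω
      rw [hg_def, norm_smul, Real.norm_eq_abs, hbound_def]
      have h2 : |deriv f (T ω)| ≤ K + F₂ * ((‖γ‖ + 1) * ‖X ω‖) := by
        refine (hd' (T ω)).trans ?_
        have := hT_bound ω
        nlinarith [norm_nonneg (X ω), norm_nonneg γ]
      exact mul_le_mul_of_nonneg_right h2 (norm_nonneg _)
  -- derivative of the integral term
  have hfd1 : HasFDerivAt (fun γ' : Vec (d + 1) => ∫ ω, f ⟪γ', X ω⟫ ∂P) (∫ ω, φ ω ∂P) γ := by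
    apply hasFDerivAt_integral_of_dominated_of_fderiv_le (bound := bound)
      (F' := fun γ' ω => deriv f ⟪γ', X ω⟫ • innerSL ℝ (X ω)) (Metric.ball_mem_nhds γ one_pos)
    · filter_upwards with γ'
      exact (hf.continuous.measurable.comp (measurable_const.inner hX)).aestronglyMeasurable
    · apply Integrable.mono' (((integrable_const (|f 0|)).add (hn1.const_mul (K * ‖γ‖))).add
        (hn2.const_mul (F₂ * ‖γ‖ ^ 2)))
      · exact (hf.continuous.measurable.comp (measurable_const.inner hX)).aestronglyMeasurable
      · filter_upwards with ω
        have h1 := hfb (T ω)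
        have h2 := hT_bound ω
        have h3 : (0:ℝ) ≤ ‖X ω‖ := norm_nonneg _
        have h4 : (0:ℝ) ≤ |T ω| := abs_nonneg _
        rw [Real.norm_eq_abs]
        show |f (T ω)| ≤ |f 0| + K * ‖γ‖ * ‖X ω‖ + F₂ * ‖γ‖ ^ 2 * ‖X ω‖ ^ 2
        nlinarith [norm_nonneg γ, mul_le_mul h2 h2 h4 (by positivity)]
    · exact hφ_meas
    · filter_upwards with ω γ' hγ'
      have hγ'n : ‖γ'‖ ≤ ‖γ‖ + 1 := by
        have := mem_ball_iff_norm.mp hγ'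
        have h5 := norm_sub_norm_le γ' γ
        linarith
      rw [aux_norm_smul_innerSL, hbound_def]
      have h2 : |deriv f ⟪γ', X ω⟫| ≤ K + F₂ * ((‖γ‖ + 1) * ‖X ω‖) := by
        refine (hd' _).trans ?_
        have h6 : |⟪γ', X ω⟫| ≤ ‖γ'‖ * ‖X ω‖ := abs_real_inner_le_norm _ _
        have h7 := mul_le_mul_of_nonneg_left h6 hF₂
        have h8 := mul_le_mul_of_nonneg_left
          (mul_le_mul_of_nonneg_right hγ'n (norm_nonneg (X ω))) hF₂
        linarith
      exact mul_le_mul_of_nonneg_right h2 (norm_nonneg _)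
    · exact hbound_int
    · filter_upwards with ω γ' hγ'
      have hinner : HasFDerivAt (fun v : Vec (d + 1) => ⟪v, X ω⟫) (innerSL ℝ (X ω)) γ' :=
        aux_hasFDerivAt_inner_right (X ω) γ'
      have hcomp := (hf1.differentiableAt.hasDerivAt (x := ⟪γ', X ω⟫)).comp_hasFDerivAt γ' hinner
      exact hcomp
  -- derivative of the quadratic term
  have hip : HasFDerivAt (fun γ' : Vec (d + 1) => ⟪γ', μ⟫) (innerSL ℝ μ) γ :=
    aux_hasFDerivAt_inner_right μ γ
  have hfd2 : HasFDerivAt (fun γ' : Vec (d + 1) => lam / 2 * ⟪γ', μ⟫ ^ 2)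
      ((lam / 2) • (⟪γ, μ⟫ • innerSL ℝ μ + ⟪γ, μ⟫ • innerSL ℝ μ)) γ := by
    have h2 := (hip.mul hip).const_mul (lam / 2)
    have heq : (fun γ' : Vec (d + 1) => lam / 2 * ⟪γ', μ⟫ ^ 2)
        = fun γ' : Vec (d + 1) => lam / 2 * (⟪γ', μ⟫ * ⟪γ', μ⟫) := by
      funext γ'; ring
    rw [heq]
    exact h2
  have hfd : HasFDerivAt (genLoss P X f lam)
      ((∫ ω, φ ω ∂P) + (lam / 2) • (⟪γ, μ⟫ • innerSL ℝ μ + ⟪γ, μ⟫ • innerSL ℝ μ)) γ :=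
    hfd1.add hfd2
  -- the gradient
  set G : Vec (d + 1) := (∫ ω, g ω ∂P) + (lam * ⟪γ, μ⟫) • μ with hG_def
  have hDG : (InnerProductSpace.toDual ℝ (Vec (d + 1))) G
      = (∫ ω, φ ω ∂P) + (lam / 2) • (⟪γ, μ⟫ • innerSL ℝ μ + ⟪γ, μ⟫ • innerSL ℝ μ) := by
    apply ContinuousLinearMap.ext
    intro v
    have hφv : (∫ ω, φ ω ∂P) v = ∫ ω, deriv f (T ω) * ⟪X ω, v⟫ ∂P := by
      rw [ContinuousLinearMap.integral_apply hφ_int v]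
      congr 1
    have hgv : ⟪∫ ω, g ω ∂P, v⟫ = ∫ ω, deriv f (T ω) * ⟪X ω, v⟫ ∂P := by
      rw [real_inner_comm, ← integral_inner hg_int v]
      congr 1; funext ω
      rw [hg_def]
      simp only [inner_smul_right]
      rw [real_inner_comm]
    simp only [InnerProductSpace.toDual_apply_apply, ContinuousLinearMap.add_apply,
      ContinuousLinearMap.smul_apply, innerSL_apply_apply, hG_def]
    rw [inner_add_left, real_inner_smul_left, hgv, hφv]
    simp only [smul_eq_mul]
    ring
  have hgrad : HasGradientAt (genLoss P X f lam) G γ := by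
    rw [hasGradientAt_iff_hasFDerivAt, hDG]
    exact hfd
  rw [hgrad.gradient]
  -- integrability of the scalar integrands
  have h_absT : Integrable (fun ω => |T ω|) P := by
    apply Integrable.mono' (hn1.const_mul ‖γ‖) (hT_m.abs.aestronglyMeasurable)
    filter_upwards with ω
    rw [Real.norm_eq_abs, abs_abs]
    exact hT_bound ω
  have h_Tf : Integrable (fun ω => T ω * deriv f (T ω)) P := by
    apply Integrable.mono' ((hn1.const_mul (K * ‖γ‖)).add
        (hn2.const_mul (F₂ * ‖γ‖ * (‖γ‖ + 1))))
      ((hT_m.mul (hcontd.measurable.comp hT_m)).aestronglyMeasurable)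
    filter_upwards with ω
    simp only [Pi.add_apply, Pi.mul_apply, Function.comp_apply]
    rw [Real.norm_eq_abs, abs_mul]
    have h2 : |deriv f (T ω)| ≤ K + F₂ * ((‖γ‖ + 1) * ‖X ω‖) := by
      refine (hd' (T ω)).trans ?_
      have := hT_bound ω
      nlinarith [norm_nonneg (X ω), norm_nonneg γ]
    have h3 : (0:ℝ) ≤ ‖X ω‖ := norm_nonneg _
    have h4 : (0:ℝ) ≤ |T ω| := abs_nonneg _
    calc |T ω| * |deriv f (T ω)| ≤ (‖γ‖ * ‖X ω‖) * (K + F₂ * ((‖γ‖ + 1) * ‖X ω‖)) := by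
          apply mul_le_mul (hT_bound ω) h2 (abs_nonneg _) (by positivity)
      _ = K * ‖γ‖ * ‖X ω‖ + F₂ * ‖γ‖ * (‖γ‖ + 1) * ‖X ω‖ ^ 2 := by ring
  -- pointwise key inequality
  have hkey : ∀ ω, c * |T ω| - (a * c + b) ≤ T ω * deriv f (T ω) :=
    fun ω => aux_key_ineq f a b c ha hb hc hlow hfar (T ω)
  -- inner product of the gradient with γ
  have hGγ : ⟪G, γ⟫ = (∫ ω, T ω * deriv f (T ω) ∂P) + lam * ⟪γ, μ⟫ * ⟪μ, γ⟫ := by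
    rw [hG_def, inner_add_left, real_inner_smul_left]
    congr 1
    rw [real_inner_comm, ← integral_inner hg_int γ]
    congr 1; funext ω
    rw [hg_def]
    simp only [inner_smul_right, hT_def]
    ring
  have h_sub_int : Integrable (fun ω => c * |T ω| - (a * c + b)) P :=
    (h_absT.const_mul c).sub (integrable_const _)
  have h_step2 : ∫ ω, (c * |T ω| - (a * c + b)) ∂P ≤ ∫ ω, T ω * deriv f (T ω) ∂P :=
    integral_mono h_sub_int h_Tf fun ω => hkey ω
  have h_int_eq : ∫ ω, (c * |T ω| - (a * c + b)) ∂P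
      = c * (∫ ω, |T ω| ∂P) - (a * c + b) := by
    rw [integral_sub (h_absT.const_mul c) (integrable_const _), integral_const_mul,
      integral_const, Measure.real, measure_univ, ENNReal.toReal_one, smul_eq_mul, one_mul]
  -- the infimum over the sphere
  have hsph : ‖γ‖⁻¹ • γ ∈ Metric.sphere (0 : Vec (d + 1)) 1 := by
    rw [mem_sphere_zero_iff_norm, norm_smul, norm_inv, norm_norm,
      inv_mul_cancel₀ hγn.ne']
  have hbdd : BddBelow (Set.range fun u : Metric.sphere (0 : Vec (d + 1)) 1 =>
      ∫ ω, |⟪(u : Vec (d + 1)), X ω⟫| ∂P) := by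
    refine ⟨0, ?_⟩
    rintro y ⟨u, rfl⟩
    exact integral_nonneg fun ω => abs_nonneg _
  set I := ⨅ u : Metric.sphere (0 : Vec (d + 1)) 1, ∫ ω, |⟪(u : Vec (d + 1)), X ω⟫| ∂P
    with hI_def
  have hInf_le : I ≤ ∫ ω, |⟪((⟨_, hsph⟩ : Metric.sphere (0 : Vec (d + 1)) 1) : Vec (d + 1)),
      X ω⟫| ∂P := ciInf_le hbdd _
  have hval : ∫ ω, |⟪(‖γ‖⁻¹ • γ : Vec (d + 1)), X ω⟫| ∂P = ‖γ‖⁻¹ * ∫ ω, |T ω| ∂P := by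
    rw [← integral_const_mul]
    congr 1; funext ω
    rw [real_inner_smul_left, abs_mul, abs_inv, abs_norm, hT_def]
  have hIle : I ≤ ‖γ‖⁻¹ * ∫ ω, |T ω| ∂P := hInf_le.trans_eq hval
  have h1 : ‖γ‖ * I ≤ ∫ ω, |T ω| ∂P := by
    have h2 := mul_le_mul_of_nonneg_left hIle (norm_nonneg γ)
    rwa [← mul_assoc, mul_inv_cancel₀ hγn.ne', one_mul] at h2
  have h1' : c * (‖γ‖ * I) ≤ c * ∫ ω, |T ω| ∂P := mul_le_mul_of_nonneg_left h1 hc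
  have hGin : ⟪G, γ⟫ ≤ ‖G‖ * ‖γ‖ := real_inner_le_norm G γ
  have hlam2 : 0 ≤ lam * ⟪γ, μ⟫ * ⟪μ, γ⟫ := by
    rw [real_inner_comm μ γ]
    nlinarith [mul_nonneg hlam (mul_self_nonneg (⟪γ, μ⟫ : ℝ)),
      mul_nonneg hlam (mul_self_nonneg (⟪μ, γ⟫ : ℝ))]
  have hmain : c * (‖γ‖ * I) - (a * c + b) ≤ ‖G‖ * ‖γ‖ := by linarith
  calc c * I - (a * c + b) / ‖γ‖ = (c * (‖γ‖ * I) - (a * c + b)) / ‖γ‖ := by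
        field_simp
    _ ≤ (‖G‖ * ‖γ‖) / ‖γ‖ := by gcongr
    _ = ‖G‖ := by field_simp
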